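/- First-order critical points with positive semidefinite block products are fixed points: Let α ≥ 0 and G ∈ O(d)^{⊗n}. If G is a first-order critical point of (QP) (i.e. C_iᵀ G = G_i Gᵀ C_i G_i for each i ∈ [n]) and moreover C̃_iᵀ G G_iᵀ is positive semidefinite for each i ∈ [n], then G is a fixed point of T_α, i.e. G ∈ T_α(G). -/

import Mathlib

open Matrix BigOperators

noncomputable section
namespace GroupSync

variable {n d : ℕ}

/-- Frobenius norm of a real matrix. -/
def frob {m k : Type*} [Fintype m] [Fintype k] (X : Matrix m k ℝ) : ℝ :=
  Real.sqrt (∑ i, ∑ j, (X i j) ^ 2)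

/-- Spectral (operator) norm of a real matrix: the operator norm of the induced
linear map between Euclidean spaces. -/
def spec {m k : Type*} [Fintype m] [Fintype k] [DecidableEq k] (X : Matrix m k ℝ) : ℝ :=
  ‖LinearMap.toContinuousLinearMap (Matrix.toEuclideanLin X)‖

/-- Nuclear norm: trace of the positive semidefinite square root of `X * Xᵀ`
(i.e. the sum of the singular values of `X`). -/
def nuclear {m k : Type*} [Fintype m] [Fintype k] [DecidableEq m] (X : Matrix m k ℝ) : ℝ :=
  (((Matrix.posSemidef_self_mul_conjTranspose X).1.eigenvectorUnitary : Matrix m m ℝ) *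
    Matrix.diagonal ((RCLike.ofReal : ℝ → ℝ) ∘ Real.sqrt ∘ (Matrix.posSemidef_self_mul_conjTranspose X).1.eigenvalues) *
    (star (Matrix.posSemidef_self_mul_conjTranspose X).1.eigenvectorUnitary : Matrix m m ℝ)).trace

/-- The positive semidefinite square root of `X * Xᵀ`. -/
def psdSqrtMulT {m k : Type*} [Fintype m] [Fintype k] [DecidableEq m] (X : Matrix m k ℝ) :
    Matrix m m ℝ :=
  ((Matrix.posSemidef_self_mul_conjTranspose X).1.eigenvectorUnitary : Matrix m m ℝ) *
    Matrix.diagonal ((RCLike.ofReal : ℝ → ℝ) ∘ Real.sqrt ∘ (Matrix.posSemidef_self_mul_conjTranspose X).1.eigenvalues) *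
    (star (Matrix.posSemidef_self_mul_conjTranspose X).1.eigenvectorUnitary : Matrix m m ℝ)

/-- Membership in the orthogonal group `O(d)`. -/
def IsOd (g : Matrix (Fin d) (Fin d) ℝ) : Prop :=
  gᵀ * g = 1 ∧ g * gᵀ = 1

/-- Membership in the special orthogonal group `SO(d)`. -/
def IsSOd (g : Matrix (Fin d) (Fin d) ℝ) : Prop :=
  IsOd g ∧ g.det = 1

/-- The `i`-th `d × d` block of an `nd × d` matrix. -/
def blk (X : Matrix (Fin n × Fin d) (Fin d) ℝ) (i : Fin n) : Matrix (Fin d) (Fin d) ℝ :=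
  Matrix.of fun a b => X (i, a) b

/-- Membership in `O(d)^{⊗n}`: every `d × d` block is orthogonal. -/
def OdN (G : Matrix (Fin n × Fin d) (Fin d) ℝ) : Prop :=
  ∀ i : Fin n, IsOd (blk G i)

/-- Membership in `SO(d)^{⊗n}`. -/
def SOdN (G : Matrix (Fin n × Fin d) (Fin d) ℝ) : Prop :=
  ∀ i : Fin n, IsSOd (blk G i)

/-- The `i`-th block column (an `nd × d` matrix) of an `nd × nd` matrix. -/
def bcol (M : Matrix (Fin n × Fin d) (Fin n × Fin d) ℝ) (i : Fin n) :
    Matrix (Fin n × Fin d) (Fin d) ℝ :=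
  Matrix.of fun p b => M p (i, b)

/-- The `ij`-th `d × d` block of an `nd × nd` matrix. -/
def dblk (M : Matrix (Fin n × Fin d) (Fin n × Fin d) ℝ) (i j : Fin n) :
    Matrix (Fin d) (Fin d) ℝ :=
  Matrix.of fun a b => M (i, a) (j, b)

/-- `G' ∈ T_α(G)` (where `Ct = C + α I`): `G' ∈ O(d)^{⊗n}` and each block `G'_i` is a
nearest point of `C̃ᵢᵀ G` in `O(d)` w.r.t. the Frobenius norm. -/
def InT (Ct : Matrix (Fin n × Fin d) (Fin n × Fin d) ℝ)
    (G G' : Matrix (Fin n × Fin d) (Fin d) ℝ) : Prop :=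
  OdN G' ∧ ∀ i : Fin n, ∀ X : Matrix (Fin d) (Fin d) ℝ, IsOd X →
    frob (blk G' i - (bcol Ct i)ᵀ * G) ≤ frob (X - (bcol Ct i)ᵀ * G)

/-- `G' ∈ ST_α(G)`: the `SO(d)` analogue of `InT`. -/
def InST (Ct : Matrix (Fin n × Fin d) (Fin n × Fin d) ℝ)
    (G G' : Matrix (Fin n × Fin d) (Fin d) ℝ) : Prop :=
  SOdN G' ∧ ∀ i : Fin n, ∀ X : Matrix (Fin d) (Fin d) ℝ, IsSOd X →
    frob (blk G' i - (bcol Ct i)ᵀ * G) ≤ frob (X - (bcol Ct i)ᵀ * G)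

/-- The quotient distance `d(X, Y) = min_{g ∈ O(d)} ‖X − Y g‖_F`. -/
def dOrth (X Y : Matrix (Fin n × Fin d) (Fin d) ℝ) : ℝ :=
  ⨅ g : {g : Matrix (Fin d) (Fin d) ℝ // IsOd g}, frob (X - Y * g.1)

/-- The objective function `f(G) = tr(Gᵀ C G)`. -/
def obj (C : Matrix (Fin n × Fin d) (Fin n × Fin d) ℝ)
    (G : Matrix (Fin n × Fin d) (Fin d) ℝ) : ℝ :=
  Matrix.trace (Gᵀ * C * G)

/-- Hadamard (entrywise) product. -/
def had {m k : Type*} (X Y : Matrix m k ℝ) : Matrix m k ℝ :=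
  Matrix.of fun p q => X p q * Y p q

/-- `W ⊗ (1_d 1_dᵀ)`, the Kronecker product of `W` with the all-ones `d × d` matrix. -/
def kron1 (W : Matrix (Fin n) (Fin n) ℝ) : Matrix (Fin n × Fin d) (Fin n × Fin d) ℝ :=
  Matrix.kroneckerMap (· * ·) W (Matrix.of fun (_ _ : Fin d) => (1 : ℝ))

/-- The all-ones matrix `1_m 1_mᵀ`. -/
def onesMat (m : Type*) : Matrix m m ℝ :=
  Matrix.of fun _ _ => (1 : ℝ)

/-- `symblockdiag`: symmetrize the diagonal `d × d` blocks, zero out all other blocks. -/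
def sbd (X : Matrix (Fin n × Fin d) (Fin n × Fin d) ℝ) :
    Matrix (Fin n × Fin d) (Fin n × Fin d) ℝ :=
  Matrix.of fun p q => if p.1 = q.1 then (X p q + X (p.1, q.2) (q.1, p.2)) / 2 else 0

/-- `S(G) = symblockdiag(C G Gᵀ) − C`. -/
def Smat (C : Matrix (Fin n × Fin d) (Fin n × Fin d) ℝ)
    (G : Matrix (Fin n × Fin d) (Fin d) ℝ) : Matrix (Fin n × Fin d) (Fin n × Fin d) ℝ :=
  sbd (C * (G * Gᵀ)) - C

/-- `G` is a second-order critical point of (QP): `S(G) G = 0` and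
`⟨H, S(G) H⟩ ≥ 0` for all tangent directions `H` (blockwise `Hᵢ Gᵢᵀ` skew-symmetric). -/
def IsSOC (C : Matrix (Fin n × Fin d) (Fin n × Fin d) ℝ)
    (G : Matrix (Fin n × Fin d) (Fin d) ℝ) : Prop :=
  Smat C G * G = 0 ∧
  ∀ H : Matrix (Fin n × Fin d) (Fin d) ℝ,
    (∀ i : Fin n, (blk H i * (blk G i)ᵀ)ᵀ = -(blk H i * (blk G i)ᵀ)) →
    0 ≤ Matrix.trace (Hᵀ * (Smat C G * H))

/-- Smallest singular value of a square matrix, as the minimum of `‖M v‖` over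
unit vectors `v`. -/
def sigmaMin (M : Matrix (Fin d) (Fin d) ℝ) : ℝ :=
  ⨅ v : {v : Fin d → ℝ // ∑ a, (v a) ^ 2 = 1}, Real.sqrt (∑ a, (M.mulVec v.1 a) ^ 2)

/-- The singular values of a square matrix: square roots of the eigenvalues of `Mᵀ M`. -/
def singVal (M : Matrix (Fin d) (Fin d) ℝ) (l : Fin d) : ℝ :=
  Real.sqrt ((by simpa only [Matrix.conjTranspose_eq_transpose_of_trivial] using Matrix.isHermitian_conjTranspose_mul_self M : (Mᵀ * M).IsHermitian).eigenvalues l)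

/-- Smallest eigenvalue of a (symmetric) matrix, as the minimum Rayleigh quotient
over unit vectors. -/
def lambdaMin {m : Type*} [Fintype m] (M : Matrix m m ℝ) : ℝ :=
  ⨅ v : {v : m → ℝ // ∑ i, (v i) ^ 2 = 1}, v.1 ⬝ᵥ M.mulVec v.1

/-- `D_α(G)`: block diagonal of the psd square roots of `(C̃ᵢᵀ G)(C̃ᵢᵀ G)ᵀ`, minus `C̃`. -/
def Dmat (Ct : Matrix (Fin n × Fin d) (Fin n × Fin d) ℝ)
    (G : Matrix (Fin n × Fin d) (Fin d) ℝ) : Matrix (Fin n × Fin d) (Fin n × Fin d) ℝ :=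
  (Matrix.of fun p q =>
    if p.1 = q.1 then psdSqrtMulT ((bcol Ct p.1)ᵀ * G) p.2 q.2 else 0) - Ct

/-- The residual function `ρ_α(G) = ‖D_α(G) G‖_F`. -/
def rho (Ct : Matrix (Fin n × Fin d) (Fin n × Fin d) ℝ)
    (G : Matrix (Fin n × Fin d) (Fin d) ℝ) : ℝ :=
  frob (Dmat Ct G * G)

/-- Blockwise infinity norm: `‖X‖_∞ = max_i ‖X_i‖` (spectral norm of the blocks). -/
def binf (X : Matrix (Fin n × Fin d) (Fin d) ℝ) : ℝ :=
  ⨆ i : Fin n, spec (blk X i)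


/-- entrywise square sum equals trace of `Aᵀ * A`. -/
lemma sumsq_eq_trace {d : ℕ} (A : Matrix (Fin d) (Fin d) ℝ) :
    ∑ a, ∑ b, (A a b) ^ 2 = (Aᵀ * A).trace := by
  rw [Finset.sum_comm]
  simp [Matrix.trace, Matrix.mul_apply, Matrix.diag, sq]

open scoped MatrixOrder in
lemma trace_psd_mul_orth_le {d : ℕ} (P Q : Matrix (Fin d) (Fin d) ℝ)
    (hP : P.PosSemidef) (hQ : Qᵀ * Q = 1) : (P * Q).trace ≤ P.trace := by
  set R := CFC.sqrt P with hRdef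
  have hRP : R * R = P := CFC.sqrt_mul_sqrt_self P hP.nonneg
  have hRsymm : Rᵀ = R := by
    have := (CFC.sqrt_nonneg P).posSemidef.1
    exact (Matrix.conjTranspose_eq_transpose_of_trivial R).symm.trans this
  have h1 : (P * Q).trace = (R * (Q * R)).trace := by
    rw [← hRP, mul_assoc, Matrix.trace_mul_comm R (R * Q), mul_assoc]
  have h2 : (R * (Q * R)).trace = ∑ p : Fin d × Fin d, R p.1 p.2 * (Q * R) p.1 p.2 := by
    rw [Fintype.sum_prod_type]
    simp only [Matrix.trace, Matrix.mul_apply, Matrix.diag]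
    rw [Finset.sum_comm]
    refine Finset.sum_congr rfl fun k _ => Finset.sum_congr rfl fun j _ => ?_
    have : R j k = R k j := (congrFun (congrFun hRsymm j) k).symm
    rw [this]
  have hsumR : ∑ p : Fin d × Fin d, (R p.1 p.2) ^ 2 = P.trace := by
    rw [Fintype.sum_prod_type]
    dsimp only
    rw [sumsq_eq_trace, hRsymm, hRP]
  have hsumQR : ∑ p : Fin d × Fin d, ((Q * R) p.1 p.2) ^ 2 = P.trace := by
    rw [Fintype.sum_prod_type]
    dsimp only
    rw [sumsq_eq_trace]
    rw [Matrix.transpose_mul, mul_assoc, ← mul_assoc Qᵀ, hQ, one_mul, hRsymm, hRP]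
  have hcs := Finset.sum_mul_sq_le_sq_mul_sq Finset.univ
    (fun p : Fin d × Fin d => R p.1 p.2) (fun p => (Q * R) p.1 p.2)
  rw [hsumR, hsumQR] at hcs
  have htr : 0 ≤ P.trace := by
    refine Finset.sum_nonneg fun j _ => ?_
    exact hP.diag_nonneg
  rw [h1, h2]
  calc (∑ p : Fin d × Fin d, R p.1 p.2 * (Q * R) p.1 p.2)
      ≤ |∑ p : Fin d × Fin d, R p.1 p.2 * (Q * R) p.1 p.2| := le_abs_self _
    _ ≤ |P.trace| := by
        rw [← Real.sqrt_sq_eq_abs, ← Real.sqrt_sq_eq_abs]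
        exact Real.sqrt_le_sqrt (by nlinarith [hcs])
    _ = P.trace := abs_of_nonneg htr

lemma inner_sum_eq_trace {d : ℕ} (Z M : Matrix (Fin d) (Fin d) ℝ) :
    ∑ a, ∑ b, Z a b * M a b = (Z * Mᵀ).trace := by
  simp [Matrix.trace, Matrix.mul_apply, Matrix.diag]

/-- first-order critical points with psd block products are fixed points.
For `α ≥ 0`, `C` symmetric and `G ∈ O(d)^{⊗n}` with `C̃ = C + α I`: if `G` is a
first-order critical point of (QP) and `C̃ᵢᵀ G Gᵢᵀ` is positive semidefinite for each
`i`, then `G ∈ T_α(G)`. -/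
theorem first_order_critical_psd_is_fixed_point {n d : ℕ}
    (C : Matrix (Fin n × Fin d) (Fin n × Fin d) ℝ) (hCsymm : Cᵀ = C)
    (α : ℝ) (hα : 0 ≤ α)
    (Ct : Matrix (Fin n × Fin d) (Fin n × Fin d) ℝ)
    (hCt : Ct = C + α • (1 : Matrix (Fin n × Fin d) (Fin n × Fin d) ℝ))
    (G : Matrix (Fin n × Fin d) (Fin d) ℝ) (hG : OdN G)
    (hfoc : ∀ i : Fin n, (bcol C i)ᵀ * G = blk G i * (Gᵀ * bcol C i) * blk G i)
    (hpsd : ∀ i : Fin n, ((bcol Ct i)ᵀ * G * (blk G i)ᵀ).PosSemidef) :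
    InT Ct G G := by
  refine ⟨hG, fun i X hX => ?_⟩
  set M : Matrix (Fin d) (Fin d) ℝ := (bcol Ct i)ᵀ * G with hM
  set Y : Matrix (Fin d) (Fin d) ℝ := blk G i with hY
  have hYo : IsOd Y := hG i
  have hP : (M * Yᵀ).PosSemidef := hpsd i
  set P : Matrix (Fin d) (Fin d) ℝ := M * Yᵀ with hPdef
  have hMPY : P * Y = M := by
    rw [hPdef, mul_assoc, hYo.1, mul_one]
  have hPt : Pᵀ = P := by
    have := hP.1
    exact (Matrix.conjTranspose_eq_transpose_of_trivial P).symm.trans this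
  have hMt : Mᵀ = Yᵀ * P := by
    rw [← hMPY, Matrix.transpose_mul, hPt]
  have hinner : ∀ Z : Matrix (Fin d) (Fin d) ℝ, Zᵀ * Z = 1 →
      ∑ a, ∑ b, Z a b * M a b ≤ P.trace := by
    intro Z hZ
    rw [inner_sum_eq_trace, hMt, ← mul_assoc, Matrix.trace_mul_comm]
    refine trace_psd_mul_orth_le P (Z * Yᵀ) hP ?_
    rw [Matrix.transpose_mul, Matrix.transpose_transpose, mul_assoc, ← mul_assoc Zᵀ, hZ,
      one_mul, hYo.2]
  have hinnerY : ∑ a, ∑ b, Y a b * M a b = P.trace := by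
    rw [inner_sum_eq_trace, hMt, ← mul_assoc, Matrix.trace_mul_comm, mul_assoc, hYo.2, mul_one]
  have expand : ∀ A B : Matrix (Fin d) (Fin d) ℝ,
      ∑ a, ∑ b, ((A - B) a b) ^ 2 =
      (∑ a, ∑ b, (A a b) ^ 2) - 2 * (∑ a, ∑ b, A a b * B a b) + ∑ a, ∑ b, (B a b) ^ 2 := by
    intro A B
    have h : ∀ a b, ((A - B) a b) ^ 2
        = (A a b) ^ 2 - 2 * (A a b * B a b) + (B a b) ^ 2 := by
      intro a b
      simp only [Matrix.sub_apply]
      ring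
    simp_rw [h, Finset.sum_add_distrib, Finset.sum_sub_distrib, ← Finset.mul_sum]
  have sq_orth : ∀ Z : Matrix (Fin d) (Fin d) ℝ, IsOd Z →
      ∑ a, ∑ b, (Z a b) ^ 2 = (d : ℝ) := by
    intro Z hZ
    rw [sumsq_eq_trace, hZ.1, Matrix.trace_one]
    simp
  show frob (Y - M) ≤ frob (X - M)
  unfold frob
  apply Real.sqrt_le_sqrt
  rw [expand Y M, expand X M, sq_orth Y hYo, sq_orth X hX]
  have h1 := hinner X hX.1
  linarith [hinnerY]
end GroupSync
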